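/- Let g : [0,1] → ℝ be three times differentiable and convex with g''(0) > 0, and suppose |g'''(t)| ≤ (S/(1−t))·g''(t) for all t ∈ [0,1) with S ≥ 0. Then g(1) − g(0) − g'(0) ≥ g''(0)/(2+S), and if moreover S < 2 then g(1) − g(0) − g'(0) ≤ g''(0)/(2−S). -/

import Mathlib

open Set Real

private lemma one_sub_rpow_hasDerivAt (p : ℝ) {x : ℝ} (hx : x < 1) :
    HasDerivAt (fun t : ℝ => (1 - t) ^ p) (-(p * (1 - x) ^ (p - 1))) x := by
  have h1 : HasDerivAt (fun t : ℝ => 1 - t) (-1) x := by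
    simpa using (hasDerivAt_id x).const_sub 1
  have h2 : HasDerivAt (fun y : ℝ => y ^ p) (p * (1 - x) ^ (p - 1)) (1 - x) :=
    Real.hasDerivAt_rpow_const (Or.inl (by linarith))
  have h3 : HasDerivAt (fun t : ℝ => (1 - t) ^ p) (p * (1 - x) ^ (p - 1) * -1) x := h2.comp x h1
  simpa [mul_neg_one] using h3

private lemma one_sub_rpow_continuousOn (p : ℝ) :
    ContinuousOn (fun t : ℝ => (1 - t) ^ p) (Ico (0:ℝ) 1) := by
  intro x hx
  have hb : (1 : ℝ) - x ≠ 0 := by have := hx.2; intro h; linarith [hx.2]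
  have : ContinuousAt (fun t : ℝ => (1 - t) ^ p) x :=
    (Real.continuousAt_rpow_const _ _ (Or.inl hb)).comp (by fun_prop)
  exact this.continuousWithinAt

private lemma one_sub_rpow_continuous {p : ℝ} (hp : 0 ≤ p) :
    Continuous fun t : ℝ => (1 - t) ^ p :=
  (Real.continuous_rpow_const hp).comp (continuous_const.sub continuous_id)

private lemma hasDerivAt_iter {g : ℝ → ℝ} (hg : ContDiffOn ℝ 3 g (Icc 0 1)) (m : ℕ)
    (hm : (m : WithTop ℕ∞) < 3) {x : ℝ} (hx : x ∈ Ioo (0:ℝ) 1) :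
    HasDerivAt (iteratedDerivWithin m g (Icc 0 1))
      (iteratedDerivWithin (m+1) g (Icc 0 1) x) x := by
  have hxI : x ∈ Icc (0:ℝ) 1 := Ioo_subset_Icc_self hx
  have hd : DifferentiableWithinAt ℝ (iteratedDerivWithin m g (Icc 0 1)) (Icc 0 1) x :=
    (hg.differentiableOn_iteratedDerivWithin hm (uniqueDiffOn_Icc one_pos)) x hxI
  have h1 := hd.hasDerivWithinAt
  rw [← iteratedDerivWithin_succ] at h1
  exact h1.hasDerivAt (Icc_mem_nhds hx.1 hx.2)

private lemma grow_lb {g : ℝ → ℝ} (hg : ContDiffOn ℝ 3 g (Icc 0 1)) {S : ℝ} (_hS : 0 ≤ S)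
    (hsc : ∀ t ∈ Ico (0:ℝ) 1, |iteratedDerivWithin 3 g (Icc 0 1) t| ≤
        S / (1 - t) * iteratedDerivWithin 2 g (Icc 0 1) t) :
    ∀ t ∈ Ico (0:ℝ) 1,
      iteratedDerivWithin 2 g (Icc 0 1) 0 * (1 - t) ^ S ≤ iteratedDerivWithin 2 g (Icc 0 1) t := by
  set g2 := iteratedDerivWithin 2 g (Icc 0 1) with hg2
  set g3 := iteratedDerivWithin 3 g (Icc 0 1) with hg3
  have hcont2 : ContinuousOn g2 (Icc 0 1) :=
    ((hg.differentiableOn_iteratedDerivWithin (by norm_num) (uniqueDiffOn_Icc one_pos))).continuousOn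
  have hmono : MonotoneOn (fun t => g2 t * (1 - t) ^ (-S)) (Ico (0:ℝ) 1) := by
    apply monotoneOn_of_deriv_nonneg (convex_Ico 0 1)
    · exact (hcont2.mono Ico_subset_Icc_self).mul (one_sub_rpow_continuousOn _)
    · rw [interior_Ico]
      intro x hx
      exact ((hasDerivAt_iter hg 2 (by norm_num) hx).mul
        (one_sub_rpow_hasDerivAt (-S) hx.2)).differentiableAt.differentiableWithinAt
    · rw [interior_Ico]
      intro x hx
      have hD : HasDerivAt (fun t => g2 t * (1 - t) ^ (-S)) _ x :=
        (hasDerivAt_iter hg 2 (by norm_num) hx).mul (one_sub_rpow_hasDerivAt (-S) hx.2)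
      rw [hD.deriv]
      set w := 1 - x with hw
      have hwp : 0 < w := by simp [hw]; linarith [hx.2]
      have hsplit : w ^ (-S - 1) = w ^ (-S) * w⁻¹ := by
        rw [sub_eq_add_neg, Real.rpow_add hwp, Real.rpow_neg_one]
      have h3 : -(S / w * g2 x) ≤ g3 x := (abs_le.1 (hsc x (Ioo_subset_Ico_self hx))).1
      have hpos : (0:ℝ) < w ^ (-S) := Real.rpow_pos_of_pos hwp _
      have key : g3 x * w ^ (-S) + g2 x * -(-S * w ^ (-S - 1))
          = (g3 x + S / w * g2 x) * w ^ (-S) := by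
        rw [hsplit]; field_simp
      rw [key]
      exact mul_nonneg (by linarith) hpos.le
  intro t ht
  have h0m : (0:ℝ) ∈ Ico (0:ℝ) 1 := by constructor <;> norm_num
  have := hmono h0m ht ht.1
  simp only [sub_zero, Real.one_rpow] at this
  have htp : (0:ℝ) < 1 - t := by linarith [ht.2]
  have h2 := mul_le_mul_of_nonneg_right this (Real.rpow_pos_of_pos htp S).le
  calc g2 0 * (1 - t) ^ S ≤ g2 t * (1 - t) ^ (-S) * (1 - t) ^ S := by simpa using h2
    _ = g2 t := by
        rw [mul_assoc, ← Real.rpow_add htp]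
        simp

private lemma grow_ub {g : ℝ → ℝ} (hg : ContDiffOn ℝ 3 g (Icc 0 1)) {S : ℝ} (_hS : 0 ≤ S)
    (hsc : ∀ t ∈ Ico (0:ℝ) 1, |iteratedDerivWithin 3 g (Icc 0 1) t| ≤
        S / (1 - t) * iteratedDerivWithin 2 g (Icc 0 1) t) :
    ∀ t ∈ Ico (0:ℝ) 1,
      iteratedDerivWithin 2 g (Icc 0 1) t ≤ iteratedDerivWithin 2 g (Icc 0 1) 0 * (1 - t) ^ (-S) := by
  set g2 := iteratedDerivWithin 2 g (Icc 0 1) with hg2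
  set g3 := iteratedDerivWithin 3 g (Icc 0 1) with hg3
  have hcont2 : ContinuousOn g2 (Icc 0 1) :=
    ((hg.differentiableOn_iteratedDerivWithin (by norm_num) (uniqueDiffOn_Icc one_pos))).continuousOn
  have hmono : AntitoneOn (fun t => g2 t * (1 - t) ^ S) (Ico (0:ℝ) 1) := by
    apply antitoneOn_of_deriv_nonpos (convex_Ico 0 1)
    · exact (hcont2.mono Ico_subset_Icc_self).mul (one_sub_rpow_continuousOn _)
    · rw [interior_Ico]
      intro x hx
      exact ((hasDerivAt_iter hg 2 (by norm_num) hx).mul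
        (one_sub_rpow_hasDerivAt S hx.2)).differentiableAt.differentiableWithinAt
    · rw [interior_Ico]
      intro x hx
      have hD : HasDerivAt (fun t => g2 t * (1 - t) ^ S) _ x :=
        (hasDerivAt_iter hg 2 (by norm_num) hx).mul (one_sub_rpow_hasDerivAt S hx.2)
      rw [hD.deriv]
      set w := 1 - x with hw
      have hwp : 0 < w := by simp [hw]; linarith [hx.2]
      have hsplit : w ^ (S - 1) = w ^ S * w⁻¹ := by
        rw [sub_eq_add_neg, Real.rpow_add hwp, Real.rpow_neg_one]
      have h3 : g3 x ≤ S / w * g2 x := (abs_le.1 (hsc x (Ioo_subset_Ico_self hx))).2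
      have hpos : (0:ℝ) < w ^ S := Real.rpow_pos_of_pos hwp _
      have key : g3 x * w ^ S + g2 x * -(S * w ^ (S - 1))
          = (g3 x - S / w * g2 x) * w ^ S := by
        rw [hsplit]; field_simp; ring
      rw [key]
      exact mul_nonpos_of_nonpos_of_nonneg (by linarith) hpos.le
  intro t ht
  have h0m : (0:ℝ) ∈ Ico (0:ℝ) 1 := by constructor <;> norm_num
  have := hmono h0m ht ht.1
  simp only [sub_zero, Real.one_rpow] at this
  have htp : (0:ℝ) < 1 - t := by linarith [ht.2]
  have h2 := mul_le_mul_of_nonneg_right this (Real.rpow_pos_of_pos htp (-S)).le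
  calc g2 t = g2 t * (1 - t) ^ S * (1 - t) ^ (-S) := by
        rw [mul_assoc, ← Real.rpow_add htp]; simp
    _ ≤ g2 0 * (1 - t) ^ (-S) := by simpa using h2

private lemma lower_aux {g : ℝ → ℝ} (hg : ContDiffOn ℝ 3 g (Icc 0 1)) {S c : ℝ} (hS : 0 ≤ S)
    (hlb : ∀ t ∈ Ico (0:ℝ) 1, c * (1 - t) ^ S ≤ iteratedDerivWithin 2 g (Icc 0 1) t) :
    c / (2 + S) ≤ g 1 - g 0 - iteratedDerivWithin 1 g (Icc 0 1) 0 := by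
  set g1 := iteratedDerivWithin 1 g (Icc 0 1) with hg1
  have hS1 : (0:ℝ) < 1 + S := by linarith
  have hS2 : (0:ℝ) < 2 + S := by linarith
  set A : ℝ → ℝ := fun t => g1 t + (c / (1 + S)) * (1 - t) ^ (1 + S) with hA
  set P : ℝ → ℝ := fun t => g t - (c / ((1 + S) * (2 + S))) * (1 - t) ^ (2 + S) with hP
  have hcont1 : ContinuousOn g1 (Icc 0 1) :=
    (hg.differentiableOn_iteratedDerivWithin (by norm_num) (uniqueDiffOn_Icc one_pos)).continuousOn
  -- A is monotone on [0,1]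
  have hAD : ∀ x ∈ Ioo (0:ℝ) 1,
      HasDerivAt A (iteratedDerivWithin 2 g (Icc 0 1) x - c * (1 - x) ^ S) x := by
    intro x hx
    have h1 := (hasDerivAt_iter hg 1 (by norm_num) hx).add
      ((one_sub_rpow_hasDerivAt (1 + S) hx.2).const_mul (c / (1 + S)))
    refine h1.congr_deriv ?_
    have e : (1 + S) - 1 = S := by ring
    rw [e]
    field_simp
    ring
  have hAmono : MonotoneOn A (Icc (0:ℝ) 1) := by
    apply monotoneOn_of_deriv_nonneg (convex_Icc 0 1)
    · exact hcont1.add (continuous_const.mul (one_sub_rpow_continuous hS1.le)).continuousOn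
    · rw [interior_Icc]
      intro x hx
      exact (hAD x hx).differentiableAt.differentiableWithinAt
    · rw [interior_Icc]
      intro x hx
      rw [(hAD x hx).deriv]
      have := hlb x (Ioo_subset_Ico_self hx)
      linarith
  -- MVT for P
  have hPD : ∀ x ∈ Ioo (0:ℝ) 1, HasDerivAt P (A x) x := by
    intro x hx
    have hg0 : HasDerivAt g (g1 x) x := by
      have := hasDerivAt_iter hg 0 (by norm_num) hx
      rwa [iteratedDerivWithin_zero] at this
    have h1 := hg0.sub
      ((one_sub_rpow_hasDerivAt (2 + S) hx.2).const_mul (c / ((1 + S) * (2 + S))))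
    refine h1.congr_deriv ?_
    have e : (2 + S) - 1 = 1 + S := by ring
    rw [hA, e]
    field_simp
    ring
  have hPc : ContinuousOn P (Icc (0:ℝ) 1) :=
    hg.continuousOn.sub (continuous_const.mul (one_sub_rpow_continuous hS2.le)).continuousOn
  obtain ⟨ξ, hξ, hslope⟩ := exists_hasDerivAt_eq_slope P A one_pos hPc hPD
  have hA0 : A 0 ≤ A ξ := hAmono (by constructor <;> norm_num)
    (Ioo_subset_Icc_self hξ) hξ.1.le
  have hP1 : P 1 = g 1 := by
    simp only [hP, sub_self]
    rw [Real.zero_rpow hS2.ne']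
    ring
  have hP0 : P 0 = g 0 - c / ((1 + S) * (2 + S)) := by
    simp only [hP, sub_zero, Real.one_rpow]
    ring
  have hAv0 : A 0 = g1 0 + c / (1 + S) := by
    simp only [hA, sub_zero, Real.one_rpow]
    ring
  rw [hP1, hP0, sub_zero, div_one] at hslope
  have hkey : g1 0 + c / (1 + S) ≤ g 1 - (g 0 - c / ((1 + S) * (2 + S))) := by
    rw [← hslope, ← hAv0]; exact hA0
  have halg : c / (2 + S) = c / (1 + S) - c / ((1 + S) * (2 + S)) := by
    field_simp
    ring
  linarith

private lemma upper_aux {g : ℝ → ℝ} (hg : ContDiffOn ℝ 3 g (Icc 0 1)) {S c : ℝ} (_hS : 0 ≤ S)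
    (hS2 : S < 2) (hS1 : S ≠ 1)
    (hub : ∀ t ∈ Ico (0:ℝ) 1, iteratedDerivWithin 2 g (Icc 0 1) t ≤ c * (1 - t) ^ (-S)) :
    g 1 - g 0 - iteratedDerivWithin 1 g (Icc 0 1) 0 ≤ c / (2 - S) := by
  set g1 := iteratedDerivWithin 1 g (Icc 0 1) with hg1
  have hd1 : (1:ℝ) - S ≠ 0 := by
    intro h; apply hS1; linarith
  have hd2 : (0:ℝ) < 2 - S := by linarith
  set A : ℝ → ℝ := fun t => g1 t + (c / (1 - S)) * (1 - t) ^ (1 - S) with hA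
  set Q : ℝ → ℝ := fun t => g t - (c / ((1 - S) * (2 - S))) * (1 - t) ^ (2 - S) with hQ
  have hcont1 : ContinuousOn g1 (Icc 0 1) :=
    (hg.differentiableOn_iteratedDerivWithin (by norm_num) (uniqueDiffOn_Icc one_pos)).continuousOn
  have hAD : ∀ x ∈ Ioo (0:ℝ) 1,
      HasDerivAt A (iteratedDerivWithin 2 g (Icc 0 1) x - c * (1 - x) ^ (-S)) x := by
    intro x hx
    have h1 := (hasDerivAt_iter hg 1 (by norm_num) hx).add
      ((one_sub_rpow_hasDerivAt (1 - S) hx.2).const_mul (c / (1 - S)))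
    refine h1.congr_deriv ?_
    have e : (1 - S) - 1 = -S := by ring
    rw [e]
    field_simp
    ring
  have hAmono : AntitoneOn A (Ico (0:ℝ) 1) := by
    apply antitoneOn_of_deriv_nonpos (convex_Ico 0 1)
    · exact (hcont1.mono Ico_subset_Icc_self).add
        (continuousOn_const.mul (one_sub_rpow_continuousOn _))
    · rw [interior_Ico]
      intro x hx
      exact (hAD x hx).differentiableAt.differentiableWithinAt
    · rw [interior_Ico]
      intro x hx
      rw [(hAD x hx).deriv]
      have := hub x (Ioo_subset_Ico_self hx)
      linarith
  have hQD : ∀ x ∈ Ioo (0:ℝ) 1, HasDerivAt Q (A x) x := by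
    intro x hx
    have hg0 : HasDerivAt g (g1 x) x := by
      have := hasDerivAt_iter hg 0 (by norm_num) hx
      rwa [iteratedDerivWithin_zero] at this
    have h1 := hg0.sub
      ((one_sub_rpow_hasDerivAt (2 - S) hx.2).const_mul (c / ((1 - S) * (2 - S))))
    refine h1.congr_deriv ?_
    have e : (2 - S) - 1 = 1 - S := by ring
    rw [hA, e]
    field_simp
    ring
  have hQc : ContinuousOn Q (Icc (0:ℝ) 1) :=
    hg.continuousOn.sub (continuous_const.mul (one_sub_rpow_continuous hd2.le)).continuousOn
  obtain ⟨ξ, hξ, hslope⟩ := exists_hasDerivAt_eq_slope Q A one_pos hQc hQD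
  have hA0 : A ξ ≤ A 0 := hAmono (by constructor <;> norm_num)
    (Ioo_subset_Ico_self hξ) hξ.1.le
  have hQ1 : Q 1 = g 1 := by
    simp only [hQ, sub_self]
    rw [Real.zero_rpow hd2.ne']
    ring
  have hQ0 : Q 0 = g 0 - c / ((1 - S) * (2 - S)) := by
    simp only [hQ, sub_zero, Real.one_rpow]
    ring
  have hAv0 : A 0 = g1 0 + c / (1 - S) := by
    simp only [hA, sub_zero, Real.one_rpow]
    ring
  rw [hQ1, hQ0, sub_zero, div_one] at hslope
  have hkey : g 1 - (g 0 - c / ((1 - S) * (2 - S))) ≤ g1 0 + c / (1 - S) := by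
    rw [← hslope, ← hAv0] at *; exact hA0
  have halg : c / (2 - S) = c / (1 - S) - c / ((1 - S) * (2 - S)) := by
    field_simp
    ring
  linarith

/-- Lemma (aux-1d), value at t = 1: bracketing under |g'''(t)| ≤ (S/(1−t))·g''(t). -/
theorem stmt_3 (g : ℝ → ℝ) (S : ℝ) (hS : 0 ≤ S)
    (hg : ContDiffOn ℝ 3 g (Set.Icc 0 1))
    (hconv : ConvexOn ℝ (Set.Icc 0 1) g)
    (h0 : 0 < iteratedDerivWithin 2 g (Set.Icc 0 1) 0)
    (hsc : ∀ t ∈ Set.Ico (0:ℝ) 1,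
      |iteratedDerivWithin 3 g (Set.Icc 0 1) t| ≤
        S / (1 - t) * iteratedDerivWithin 2 g (Set.Icc 0 1) t) :
    iteratedDerivWithin 2 g (Set.Icc 0 1) 0 / (2 + S)
      ≤ g 1 - g 0 - iteratedDerivWithin 1 g (Set.Icc 0 1) 0 ∧
    (S < 2 →
      g 1 - g 0 - iteratedDerivWithin 1 g (Set.Icc 0 1) 0
        ≤ iteratedDerivWithin 2 g (Set.Icc 0 1) 0 / (2 - S)) := by
  set c := iteratedDerivWithin 2 g (Set.Icc 0 1) 0 with hc
  constructor
  · exact lower_aux hg hS (grow_lb hg hS hsc)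
  · intro hS2
    have hub := grow_ub hg hS hsc
    rcases eq_or_ne S 1 with h1 | h1
    · -- S = 1 : limiting argument
      subst h1
      have h21 : (2:ℝ) - 1 = 1 := by norm_num
      rw [h21, div_one]
      refine le_of_forall_pos_le_add fun ε hε => ?_
      set δ : ℝ := ε / (c + ε) with hδ
      have hcε : (0:ℝ) < c + ε := by linarith
      have hδ0 : 0 < δ := div_pos hε hcε
      have hδ1 : δ < 1 := by
        rw [hδ, div_lt_one hcε]; linarith
      set S' : ℝ := 1 + δ with hS'
      have hub' : ∀ t ∈ Ico (0:ℝ) 1,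
          iteratedDerivWithin 2 g (Icc 0 1) t ≤ c * (1 - t) ^ (-S') := by
        intro t ht
        refine (hub t ht).trans ?_
        have htp : (0:ℝ) < 1 - t := by linarith [ht.2]
        have ht1 : (1:ℝ) - t ≤ 1 := by linarith [ht.1]
        exact mul_le_mul_of_nonneg_left
          (Real.rpow_le_rpow_of_exponent_ge htp ht1 (by linarith)) h0.le
      have := upper_aux hg (by linarith) (by linarith) (by intro h; rw [hS'] at h; linarith)
        hub'
      refine this.trans ?_
      rw [div_le_iff₀ (by linarith : (0:ℝ) < 2 - S')]
      have : (c + ε) * δ = ε := by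
        rw [hδ]; field_simp
      nlinarith
    · exact upper_aux hg hS hS2 h1 hub
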